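/- The functions F₁(x) = log x and F₂(x) = log(1−x) each satisfy Watts's fifth-order differential equation on (0,1): for every x ∈ (0,1) and for F = F₁ and F = F₂, the third derivative at x of the function y ↦ (y(1−y))^{4/3} · (d/dy)[ (y(1−y))^{2/3} · F′(y) ] equals 0. -/

import Mathlib

open Real Filter Set

private lemma hdu (t : ℝ) : HasDerivAt (fun t:ℝ => t*(1-t)) (1-2*t) t := by
  have h := (hasDerivAt_id t).mul ((hasDerivAt_id t).const_sub 1)
  convert h using 1 <;> first | rfl | simp [id_eq] <;> ring

private lemma hd1m (t : ℝ) : HasDerivAt (fun s:ℝ => 1-s) (-1) t := by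
  simpa using (hasDerivAt_id t).const_sub 1

private lemma third_quad (a b c x : ℝ) :
    iteratedDeriv 3 (fun y : ℝ => a*y^2 + b*y + c) x = 0 := by
  have h1 : deriv (fun y : ℝ => a*y^2 + b*y + c) = fun y => 2*a*y + b := by
    funext y
    have H : HasDerivAt (fun y : ℝ => a*y^2 + b*y + c) (2*a*y + b) y := by
      have := (((hasDerivAt_pow 2 y).const_mul a).add
        ((hasDerivAt_id y).const_mul b)).add_const c
      convert this using 1 <;> first | rfl | simp [id_eq] <;> ring
    exact H.deriv
  have h2 : deriv (fun y : ℝ => 2*a*y + b) = fun _ => 2*a := by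
    funext y
    have H : HasDerivAt (fun y : ℝ => 2*a*y + b) (2*a) y := by
      have := ((hasDerivAt_id y).const_mul (2*a)).add_const b
      convert this using 1 <;> first | rfl | simp [id_eq]
    exact H.deriv
  simp [iteratedDeriv_succ, iteratedDeriv_zero, h1, h2]

private lemma iter3_congr {f g : ℝ → ℝ} {x : ℝ} (h : f =ᶠ[nhds x] g) :
    iteratedDeriv 3 f x = iteratedDeriv 3 g x := by
  simp only [iteratedDeriv_succ, iteratedDeriv_zero]
  exact (h.deriv.deriv).deriv_eq

private lemma key1 {y : ℝ} (hy : y ∈ Ioo (0:ℝ) 1) :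
    (y * (1 - y)) ^ ((4:ℝ)/3) *
      deriv (fun t => (t * (1 - t)) ^ ((2:ℝ)/3) * t⁻¹) y
    = (1/3)*y^2 + 0*y + (-1/3) := by
  obtain ⟨hy0, hy1⟩ := hy
  have hu : (0:ℝ) < y * (1 - y) := mul_pos hy0 (by linarith)
  have H : HasDerivAt (fun t => (t * (1 - t)) ^ ((2:ℝ)/3) * t⁻¹)
      ((1-2*y) * ((2:ℝ)/3) * (y*(1-y)) ^ ((2:ℝ)/3 - 1) * y⁻¹
        + (y*(1-y)) ^ ((2:ℝ)/3) * (-(y^2)⁻¹)) y :=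
    ((hdu y).rpow_const (Or.inl hu.ne')).mul (hasDerivAt_inv hy0.ne')
  rw [H.deriv]
  have e1 : (y*(1-y)) ^ ((4:ℝ)/3) * (y*(1-y)) ^ ((2:ℝ)/3 - 1) = y*(1-y) := by
    rw [← Real.rpow_add hu]; norm_num
  have e2 : (y*(1-y)) ^ ((4:ℝ)/3) * (y*(1-y)) ^ ((2:ℝ)/3) = (y*(1-y))^2 := by
    rw [← Real.rpow_add hu]; norm_num
  calc (y*(1-y)) ^ ((4:ℝ)/3) *
        ((1-2*y) * ((2:ℝ)/3) * (y*(1-y)) ^ ((2:ℝ)/3 - 1) * y⁻¹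
          + (y*(1-y)) ^ ((2:ℝ)/3) * (-(y^2)⁻¹))
      = ((y*(1-y)) ^ ((4:ℝ)/3) * (y*(1-y)) ^ ((2:ℝ)/3 - 1)) * ((1-2*y) * (2/3) * y⁻¹)
        + ((y*(1-y)) ^ ((4:ℝ)/3) * (y*(1-y)) ^ ((2:ℝ)/3)) * (-(y^2)⁻¹) := by ring
    _ = (y*(1-y)) * ((1-2*y) * (2/3) * y⁻¹) + (y*(1-y))^2 * (-(y^2)⁻¹) := by rw [e1, e2]
    _ = (1/3)*y^2 + 0*y + (-1/3) := by field_simp; ring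

private lemma key2 {y : ℝ} (hy : y ∈ Ioo (0:ℝ) 1) :
    (y * (1 - y)) ^ ((4:ℝ)/3) *
      deriv (fun t => (t * (1 - t)) ^ ((2:ℝ)/3) * (-(1-t)⁻¹)) y
    = (1/3)*y^2 + (-2/3)*y + 0 := by
  obtain ⟨hy0, hy1⟩ := hy
  have h1 : (0:ℝ) < 1 - y := by linarith
  have hu : (0:ℝ) < y * (1 - y) := mul_pos hy0 h1
  have H : HasDerivAt (fun t => (t * (1 - t)) ^ ((2:ℝ)/3) * (-(1-t)⁻¹))
      ((1-2*y) * ((2:ℝ)/3) * (y*(1-y)) ^ ((2:ℝ)/3 - 1) * (-(1-y)⁻¹)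
        + (y*(1-y)) ^ ((2:ℝ)/3) * (-(-(-1)/(1-y)^2))) y :=
    ((hdu y).rpow_const (Or.inl hu.ne')).mul (((hd1m y).inv h1.ne').neg)
  rw [H.deriv]
  have e1 : (y*(1-y)) ^ ((4:ℝ)/3) * (y*(1-y)) ^ ((2:ℝ)/3 - 1) = y*(1-y) := by
    rw [← Real.rpow_add hu]; norm_num
  have e2 : (y*(1-y)) ^ ((4:ℝ)/3) * (y*(1-y)) ^ ((2:ℝ)/3) = (y*(1-y))^2 := by
    rw [← Real.rpow_add hu]; norm_num
  calc (y*(1-y)) ^ ((4:ℝ)/3) *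
        ((1-2*y) * ((2:ℝ)/3) * (y*(1-y)) ^ ((2:ℝ)/3 - 1) * (-(1-y)⁻¹)
          + (y*(1-y)) ^ ((2:ℝ)/3) * (-(-(-1)/(1-y)^2)))
      = ((y*(1-y)) ^ ((4:ℝ)/3) * (y*(1-y)) ^ ((2:ℝ)/3 - 1)) * ((1-2*y) * (2/3) * (-(1-y)⁻¹))
        + ((y*(1-y)) ^ ((4:ℝ)/3) * (y*(1-y)) ^ ((2:ℝ)/3)) * (-(1/(1-y)^2)) := by ring
    _ = (y*(1-y)) * ((1-2*y) * (2/3) * (-(1-y)⁻¹)) + (y*(1-y))^2 * (-(1/(1-y)^2)) := by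
        rw [e1, e2]
    _ = (1/3)*y^2 + (-2/3)*y + 0 := by field_simp; ring

private lemma dlog1m {t : ℝ} (ht : t ∈ Ioo (0:ℝ) 1) :
    deriv (fun s => Real.log (1 - s)) t = -(1-t)⁻¹ := by
  have h1 : (1:ℝ) - t ≠ 0 := by have := ht.2; intro h; linarith [sub_eq_zero.mp h]
  have H : HasDerivAt (fun s => Real.log (1 - s)) ((1-t)⁻¹ * -1) t :=
    (Real.hasDerivAt_log h1).comp t (hd1m t)
  rw [H.deriv]; ring

/-- `log x` and `log(1−x)` each satisfy Watts's fifth-order differential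
equation on `(0,1)`. -/
theorem stmt9 (x : ℝ) (hx : x ∈ Set.Ioo (0:ℝ) 1) :
    iteratedDeriv 3
      (fun y => (y * (1 - y)) ^ ((4:ℝ)/3) *
        deriv (fun t => (t * (1 - t)) ^ ((2:ℝ)/3) *
          deriv (fun s => Real.log s) t) y) x = 0 ∧
    iteratedDeriv 3
      (fun y => (y * (1 - y)) ^ ((4:ℝ)/3) *
        deriv (fun t => (t * (1 - t)) ^ ((2:ℝ)/3) *
          deriv (fun s => Real.log (1 - s)) t) y) x = 0 := by
  have hmem : Ioo (0:ℝ) 1 ∈ nhds x := isOpen_Ioo.mem_nhds hx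
  constructor
  · have hinner : (fun t => (t * (1 - t)) ^ ((2:ℝ)/3) * deriv (fun s => Real.log s) t)
        = (fun t => (t * (1 - t)) ^ ((2:ℝ)/3) * t⁻¹) := by
      funext t; rw [Real.deriv_log]
    have hev : (fun y => (y * (1 - y)) ^ ((4:ℝ)/3) *
          deriv (fun t => (t * (1 - t)) ^ ((2:ℝ)/3) * deriv (fun s => Real.log s) t) y)
        =ᶠ[nhds x] (fun y => (1/3)*y^2 + 0*y + (-1/3)) :=
      eventuallyEq_of_mem hmem (fun y hy => by rw [hinner]; exact key1 hy)
    rw [iter3_congr hev]; exact third_quad _ _ _ _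
  · have hev : (fun y => (y * (1 - y)) ^ ((4:ℝ)/3) *
          deriv (fun t => (t * (1 - t)) ^ ((2:ℝ)/3) * deriv (fun s => Real.log (1 - s)) t) y)
        =ᶠ[nhds x] (fun y => (1/3)*y^2 + (-2/3)*y + 0) := by
      refine eventuallyEq_of_mem hmem (fun y hy => ?_)
      have hyn : Ioo (0:ℝ) 1 ∈ nhds y := isOpen_Ioo.mem_nhds hy
      have hinner : (fun t => (t * (1 - t)) ^ ((2:ℝ)/3) * deriv (fun s => Real.log (1 - s)) t)
          =ᶠ[nhds y] (fun t => (t * (1 - t)) ^ ((2:ℝ)/3) * (-(1-t)⁻¹)) :=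
        eventuallyEq_of_mem hyn (fun t ht => by rw [dlog1m ht])
      rw [hinner.deriv_eq]; exact key2 hy
    rw [iter3_congr hev]; exact third_quad _ _ _ _
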